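/- For any symmetric recurrent aperiodic random walk in Z^2, for every integer a ≥ 0 and every integer k ≥ 1, P(T_a ≥ k) ≤ 2·g(a)/g(k-1). -/

import Mathlib

open MeasureTheory Filter Real

noncomputable section

variable {Ω : Type} [MeasurableSpace Ω]

/-- Position of the walk with steps `X` at time `n`. -/
def walk2 (X : ℕ → Ω → ℤ × ℤ) (n : ℕ) (ω : Ω) : ℤ × ℤ :=
  ∑ i ∈ Finset.range n, X i ω

/-- `X` is the step sequence of a symmetric recurrent aperiodic random walk on `ℤ²`:
i.i.d. steps, symmetric law, the walk returns to the origin infinitely often a.s.,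
and the steps are not supported on a proper subgroup of `ℤ²`. -/
def IsSymRecAperiodic2 (P : Measure Ω) (X : ℕ → Ω → ℤ × ℤ) : Prop :=
  (∀ n, Measurable (X n)) ∧
  ProbabilityTheory.iIndepFun X P ∧
  (∀ n v, P {ω | X n ω = v} = P {ω | X 0 ω = v}) ∧
  (∀ v, P {ω | X 0 ω = v} = P {ω | X 0 ω = -v}) ∧
  (P {ω | ∀ m : ℕ, ∃ n > m, walk2 X n ω = 0} = 1) ∧
  (∀ G : AddSubgroup (ℤ × ℤ), (∀ v, P {ω | X 0 ω = v} ≠ 0 → v ∈ G) → G = ⊤)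

/-- `T_a = min{j > 0 : S_{a+j} = 0}`. -/
def hitTimeAfter (X : ℕ → Ω → ℤ × ℤ) (a : ℕ) (ω : Ω) : ℕ :=
  sInf {j | 0 < j ∧ walk2 X (a + j) ω = 0}

/-- The truncated Green function `g(n) = Σ_{k=0}^n P_k(0,0)`. -/
def green (P : Measure Ω) (X : ℕ → Ω → ℤ × ℤ) (n : ℕ) : ℝ :=
  ∑ k ∈ Finset.range (n + 1), (P {ω | walk2 X k ω = 0}).toReal

namespace Stmt10Aux

variable {P : Measure Ω} {X : ℕ → Ω → ℤ × ℤ}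

lemma meas_walk (hm : ∀ n, Measurable (X n)) (n : ℕ) : Measurable (walk2 X n) :=
  Finset.measurable_sum _ (fun i _ => hm i)

lemma meas_walk_event (hm : ∀ n, Measurable (X n)) (n : ℕ) (v : ℤ × ℤ) :
    MeasurableSet {ω | walk2 X n ω = v} :=
  meas_walk hm n (show MeasurableSet {v} from (Set.to_countable _).measurableSet)

/-- independence of the first `N` steps (as a tuple) from a later block sum. -/
lemma indep_tuple_block (hm : ∀ n, Measurable (X n))
    (hind : ProbabilityTheory.iIndepFun X P) (N M : ℕ) :
    ProbabilityTheory.IndepFun (fun ω (l : Fin N) => X l ω)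
      (fun ω => ∑ l ∈ Finset.Ico N M, X l ω) P := by
  have hdisj : Disjoint (Finset.range N) (Finset.Ico N M) := by
    simp only [Finset.disjoint_left, Finset.mem_range, Finset.mem_Ico]
    omega
  have h := hind.indepFun_finset (Finset.range N) (Finset.Ico N M) hdisj hm
  have h2 := h.comp
    (φ := fun f (l : Fin N) => f ⟨l.1, Finset.mem_range.mpr l.2⟩)
    (ψ := fun f => ∑ l : (Finset.Ico N M : Finset ℕ), f l)
    (measurable_pi_lambda _ (fun l => measurable_pi_apply _))
    (Finset.univ.measurable_sum (fun i _ => measurable_pi_apply i))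
  convert h2 using 1
  all_goals funext ω
  all_goals simp [Finset.sum_coe_sort, Finset.sum_attach]
  exact (Finset.sum_attach _ (fun l => X l ω)).symm

/-- independence of a block sum from the next single step. -/
lemma indep_block_single (hm : ∀ n, Measurable (X n))
    (hind : ProbabilityTheory.iIndepFun X P) (m s : ℕ) :
    ProbabilityTheory.IndepFun (X (m + s))
      (fun ω => ∑ l ∈ Finset.Ico m (m + s), X l ω) P := by
  have hdisj : Disjoint ({m + s} : Finset ℕ) (Finset.Ico m (m + s)) := by
    simp only [Finset.disjoint_left, Finset.mem_singleton, Finset.mem_Ico]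
    omega
  have h := hind.indepFun_finset ({m + s} : Finset ℕ) (Finset.Ico m (m + s)) hdisj hm
  have h2 := h.comp
    (φ := fun f => f ⟨m + s, Finset.mem_singleton_self _⟩)
    (ψ := fun f => ∑ l : (Finset.Ico m (m + s) : Finset ℕ), f l)
    (measurable_pi_apply _ :
      Measurable fun f : ({m + s} : Finset ℕ) → ℤ × ℤ => f ⟨m + s, Finset.mem_singleton_self _⟩)
    (Finset.univ.measurable_sum (fun i _ => measurable_pi_apply i))
  convert h2 using 1
  funext ω
  simpa using (Finset.sum_coe_sort (Finset.Ico m (m + s)) (fun l => X l ω)).symm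
  funext ω
  exact (Finset.sum_attach _ (fun l => X l ω)).symm

/-- one-step decomposition of a block sum. -/
lemma block_decomp (hm : ∀ n, Measurable (X n))
    (hind : ProbabilityTheory.iIndepFun X P)
    (m s : ℕ) (v : ℤ × ℤ) :
    P {ω | ∑ l ∈ Finset.Ico m (m + (s + 1)), X l ω = v} =
      ∑' w : ℤ × ℤ, P {ω | X (m + s) ω = w} * P {ω | ∑ l ∈ Finset.Ico m (m + s), X l ω = v - w} := by
  have hsum : ∀ ω, ∑ l ∈ Finset.Ico m (m + (s + 1)), X l ω
      = (∑ l ∈ Finset.Ico m (m + s), X l ω) + X (m + s) ω := by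
    intro ω
    rw [show m + (s + 1) = (m + s) + 1 by ring]
    exact Finset.sum_Ico_succ_top (Nat.le_add_right m s) _
  have hset : {ω | ∑ l ∈ Finset.Ico m (m + (s + 1)), X l ω = v}
      = ⋃ w : ℤ × ℤ, ({ω | X (m + s) ω = w} ∩ {ω | ∑ l ∈ Finset.Ico m (m + s), X l ω = v - w}) := by
    ext ω
    simp only [Set.mem_setOf_eq, Set.mem_iUnion, Set.mem_inter_iff, hsum ω]
    constructor
    · intro h
      exact ⟨X (m + s) ω, rfl, by rw [← h]; ring⟩
    · rintro ⟨w, hw, hb⟩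
      rw [hw, hb]; ring
  rw [hset, measure_iUnion]
  · refine tsum_congr (fun w => ?_)
    have hi := (indep_block_single hm hind m s).measure_inter_preimage_eq_mul
      ({w} : Set (ℤ × ℤ)) ({v - w} : Set (ℤ × ℤ))
      ((Set.to_countable ({w} : Set (ℤ × ℤ))).measurableSet)
      ((Set.to_countable ({v - w} : Set (ℤ × ℤ))).measurableSet)
    simpa [Set.preimage, Set.mem_singleton_iff] using hi
  · intro w w' hww'
    simp only [Function.onFun, Set.disjoint_left, Set.mem_inter_iff, Set.mem_setOf_eq]
    rintro ω ⟨h1, -⟩ ⟨h2, -⟩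
    exact hww' (h1 ▸ h2 ▸ rfl)
  · intro w
    exact ((hm (m + s)) ((Set.to_countable ({w} : Set (ℤ × ℤ))).measurableSet)).inter
      ((Finset.measurable_sum (Finset.Ico m (m + s)) (fun i _ => hm i))
        ((Set.to_countable ({v - w} : Set (ℤ × ℤ))).measurableSet))

/-- shift invariance of block sums. -/
lemma block_eq_walk (hm : ∀ n, Measurable (X n))
    (hind : ProbabilityTheory.iIndepFun X P)
    (hid : ∀ n v, P {ω | X n ω = v} = P {ω | X 0 ω = v}) :
    ∀ (s m : ℕ) (v : ℤ × ℤ),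
      P {ω | ∑ l ∈ Finset.Ico m (m + s), X l ω = v} = P {ω | walk2 X s ω = v} := by
  intro s
  induction s with
  | zero =>
    intro m v
    simp [walk2]
  | succ s ih =>
    intro m v
    rw [block_decomp hm hind m s v]
    have h0 : P {ω | walk2 X (s + 1) ω = v}
        = ∑' w : ℤ × ℤ, P {ω | X (0 + s) ω = w} * P {ω | ∑ l ∈ Finset.Ico 0 (0 + s), X l ω = v - w} := by
      have := block_decomp hm hind 0 s v
      rw [← this]
      congr 1
      ext ω
      simp only [Set.mem_setOf_eq, walk2, Finset.range_eq_Ico, Nat.zero_add]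
    rw [h0]
    refine tsum_congr (fun w => ?_)
    rw [hid (m + s) w, hid (0 + s) w, ih m (v - w), ih 0 (v - w)]

lemma hit_eq_iff (a i : ℕ) (hi : 0 < i) (ω : Ω) :
    hitTimeAfter X a ω = i ↔
      (walk2 X (a + i) ω = 0 ∧ ∀ j, 0 < j → j < i → walk2 X (a + j) ω ≠ 0) := by
  unfold hitTimeAfter
  set S : Set ℕ := {j | 0 < j ∧ walk2 X (a + j) ω = 0} with hS
  constructor
  · intro h
    have hne : S.Nonempty := by
      by_contra hemp
      rw [Set.not_nonempty_iff_eq_empty] at hemp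
      rw [hemp] at h
      simp [Nat.sInf_empty] at h
      omega
    have hmem := Nat.sInf_mem hne
    rw [h] at hmem
    refine ⟨hmem.2, fun j hj0 hji hwalk => ?_⟩
    have : j ∈ S := ⟨hj0, hwalk⟩
    have := Nat.sInf_le this
    omega
  · rintro ⟨h1, h2⟩
    have hmem : i ∈ S := ⟨hi, h1⟩
    have hle := Nat.sInf_le hmem
    have hmem' := Nat.sInf_mem ⟨i, hmem⟩
    rcases lt_or_eq_of_le hle with hlt | heq
    · exact absurd hmem'.2 (h2 _ hmem'.1 hlt)
    · exact heq

lemma meas_hit_eq (hm : ∀ n, Measurable (X n)) (a i : ℕ) (hi : 0 < i) :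
    MeasurableSet {ω | hitTimeAfter X a ω = i} := by
  have : {ω | hitTimeAfter X a ω = i}
      = {ω | walk2 X (a + i) ω = 0} ∩ ⋂ j ∈ Finset.Ico 1 i, {ω | walk2 X (a + j) ω ≠ 0} := by
    ext ω
    simp only [Set.mem_setOf_eq, Set.mem_inter_iff, Set.mem_iInter, Finset.mem_Ico]
    rw [hit_eq_iff a i hi ω]
    constructor
    · rintro ⟨h1, h2⟩
      exact ⟨h1, fun j hj => h2 j hj.1 hj.2⟩
    · rintro ⟨h1, h2⟩
      exact ⟨h1, fun j hj0 hji => h2 j ⟨hj0, hji⟩⟩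
  rw [this]
  refine (meas_walk_event hm _ _).inter (MeasurableSet.biInter (Set.to_countable _) (fun j _ => ?_))
  exact (meas_walk_event hm _ _).compl

/-- The key factorization: `P(T_a = i, S_{a+j} = 0) = P(T_a = i) P(S_{j-i} = 0)`. -/
lemma key_factor (hm : ∀ n, Measurable (X n))
    (hind : ProbabilityTheory.iIndepFun X P)
    (hid : ∀ n v, P {ω | X n ω = v} = P {ω | X 0 ω = v})
    (a i j : ℕ) (h1 : 1 ≤ i) (hij : i ≤ j) :
    P ({ω | hitTimeAfter X a ω = i} ∩ {ω | walk2 X (a + j) ω = 0})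
      = P {ω | hitTimeAfter X a ω = i} * P {ω | walk2 X (j - i) ω = 0} := by
  classical
  set N := a + i with hN
  -- tuple map and hitting set in tuple space
  set T₁ : Ω → (Fin N → ℤ × ℤ) := fun ω (l : Fin N) => X l ω with hT₁
  set F : (Fin N → ℤ × ℤ) → ℕ → ℤ × ℤ := fun f r => if h : r < N then f ⟨r, h⟩ else 0 with hF
  have hwalkF : ∀ (ω : Ω) (l : ℕ), l ≤ N → walk2 X l ω = ∑ r ∈ Finset.range l, F (T₁ ω) r := by
    intro ω l hl
    refine Finset.sum_congr rfl (fun r hr => ?_)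
    have : r < N := lt_of_lt_of_le (Finset.mem_range.mp hr) hl
    simp [hF, hT₁, this]
  set A : Set (Fin N → ℤ × ℤ) :=
    {f | (∑ r ∈ Finset.range (a + i), F f r) = 0 ∧
         ∀ j', 0 < j' → j' < i → (∑ r ∈ Finset.range (a + j'), F f r) ≠ 0} with hA
  have hTset : {ω | hitTimeAfter X a ω = i} = T₁ ⁻¹' A := by
    ext ω
    simp only [Set.mem_setOf_eq, Set.mem_preimage, hA, Set.mem_setOf_eq]
    rw [hit_eq_iff a i h1 ω]
    constructor
    · rintro ⟨hh1, hh2⟩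
      refine ⟨by rw [← hwalkF ω (a + i) le_rfl]; exact hh1, fun j' hj0 hji => ?_⟩
      rw [← hwalkF ω (a + j') (by omega)]
      exact hh2 j' hj0 hji
    · rintro ⟨hh1, hh2⟩
      refine ⟨by rw [hwalkF ω (a + i) le_rfl]; exact hh1, fun j' hj0 hji => ?_⟩
      rw [hwalkF ω (a + j') (by omega)]
      exact hh2 j' hj0 hji
  -- block sum
  set B : Ω → ℤ × ℤ := fun ω => ∑ l ∈ Finset.Ico N (a + j), X l ω with hB
  have hsplit : ∀ ω, walk2 X (a + j) ω = walk2 X N ω + B ω := by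
    intro ω
    simp only [walk2, hB, Finset.range_eq_Ico]
    rw [Finset.sum_Ico_consecutive _ (Nat.zero_le N) (by omega)]
  have hset : {ω | hitTimeAfter X a ω = i} ∩ {ω | walk2 X (a + j) ω = 0}
      = T₁ ⁻¹' A ∩ B ⁻¹' {0} := by
    rw [hTset]
    ext ω
    simp only [Set.mem_inter_iff, Set.mem_preimage, Set.mem_setOf_eq, Set.mem_singleton_iff]
    constructor
    · rintro ⟨hT, hW⟩
      refine ⟨hT, ?_⟩
      have hw0 : walk2 X N ω = 0 := by
        have := hwalkF ω N le_rfl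
        rw [this]
        exact hT.1
      have := hsplit ω
      rw [hw0, zero_add] at this
      rw [← this]; exact hW
    · rintro ⟨hT, hB0⟩
      refine ⟨hT, ?_⟩
      have hw0 : walk2 X N ω = 0 := by
        have := hwalkF ω N le_rfl
        rw [this]
        exact hT.1
      rw [hsplit ω, hw0, hB0, add_zero]
  have hindep := indep_tuple_block hm hind N (a + j)
  have hmul := hindep.measure_inter_preimage_eq_mul A {0}
    ((Set.to_countable _).measurableSet) ((Set.to_countable _).measurableSet)
  rw [hset]
  rw [hmul, ← hTset]
  congr 1
  have := block_eq_walk hm hind hid (j - i) N (0 : ℤ × ℤ)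
  rw [show N + (j - i) = a + j by omega] at this
  rw [← this]
  rfl

end Stmt10Aux

open Stmt10Aux in
theorem statement10 (P : Measure Ω) [IsProbabilityMeasure P]
    (X : ℕ → Ω → ℤ × ℤ) (hX : IsSymRecAperiodic2 P X)
    (a k : ℕ) (hk : 1 ≤ k) :
    (P {ω | k ≤ hitTimeAfter X a ω}).toReal ≤ 2 * green P X a / green P X (k - 1) := by
  classical
  obtain ⟨hm, hind, hid, -, -, -⟩ := hX
  set n := k - 1 with hn
  have hkn : k = n + 1 := by omega
  set μ : ℕ → ENNReal := fun m => P {ω | walk2 X m ω = 0} with hμ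
  set G : ℕ → ENNReal := fun m => ∑ r ∈ Finset.range (m + 1), μ r with hG
  have hμ0 : μ 0 = 1 := by
    have h : {ω : Ω | walk2 X 0 ω = 0} = Set.univ := by
      ext ω; simp [walk2]
    simp only [hμ, h, measure_univ]
  have hGfin : ∀ m, G m ≠ ⊤ := by
    intro m
    exact (ENNReal.sum_lt_top.mpr (fun r _ => (measure_lt_top P _))).ne
  have hgreen : ∀ m, green P X m = (G m).toReal := by
    intro m
    rw [hG, ENNReal.toReal_sum (fun r _ => measure_ne_top P _)]
    rfl
  have hG1 : ∀ m, (1 : ENNReal) ≤ G m := by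
    intro m
    calc (1 : ENNReal) = μ 0 := hμ0.symm
    _ ≤ G m := Finset.single_le_sum (f := μ) (fun r _ => zero_le)
        (Finset.mem_range.mpr (Nat.succ_pos m))
  -- first-hit decomposition
  have hdecomp : ∀ j, 1 ≤ j →
      μ (a + j) = ∑ i ∈ Finset.Icc 1 j, P {ω | hitTimeAfter X a ω = i} * μ (j - i) := by
    intro j hj
    have hset : {ω | walk2 X (a + j) ω = 0}
        = ⋃ i ∈ Finset.Icc 1 j, ({ω | hitTimeAfter X a ω = i} ∩ {ω | walk2 X (a + j) ω = 0}) := by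
      ext ω
      simp only [Set.mem_setOf_eq, Set.mem_iUnion, Set.mem_inter_iff, Finset.mem_Icc,
        exists_prop]
      constructor
      · intro hw
        have hjS : j ∈ {j' | 0 < j' ∧ walk2 X (a + j') ω = 0} := ⟨hj, hw⟩
        have hmem := Nat.sInf_mem ⟨j, hjS⟩
        have hle := Nat.sInf_le hjS
        exact ⟨hitTimeAfter X a ω, ⟨hmem.1, hle⟩, rfl, hw⟩
      · rintro ⟨i, -, -, hw⟩
        exact hw
    have hdisj : (↑(Finset.Icc 1 j) : Set ℕ).PairwiseDisjoint
        (fun i => {ω | hitTimeAfter X a ω = i} ∩ {ω | walk2 X (a + j) ω = 0}) := by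
      intro i hi i' hi' hii'
      simp only [Function.onFun, Set.disjoint_left, Set.mem_inter_iff, Set.mem_setOf_eq]
      rintro ω ⟨h1, -⟩ ⟨h2, -⟩
      exact hii' (h1 ▸ h2 ▸ rfl)
    have hmeas : ∀ i ∈ Finset.Icc 1 j,
        MeasurableSet ({ω | hitTimeAfter X a ω = i} ∩ {ω | walk2 X (a + j) ω = 0}) := by
      intro i hi
      have hi1 : 0 < i := by
        have := (Finset.mem_Icc.mp hi).1; omega
      exact (meas_hit_eq hm a i hi1).inter (meas_walk_event hm _ _)
    calc μ (a + j) = P (⋃ i ∈ Finset.Icc 1 j,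
        ({ω | hitTimeAfter X a ω = i} ∩ {ω | walk2 X (a + j) ω = 0})) := by rw [hμ, ← hset]
    _ = ∑ i ∈ Finset.Icc 1 j,
        P ({ω | hitTimeAfter X a ω = i} ∩ {ω | walk2 X (a + j) ω = 0}) :=
      measure_biUnion_finset hdisj hmeas
    _ = ∑ i ∈ Finset.Icc 1 j, P {ω | hitTimeAfter X a ω = i} * μ (j - i) := by
      refine Finset.sum_congr rfl (fun i hi => ?_)
      obtain ⟨hi1, hi2⟩ := Finset.mem_Icc.mp hi
      exact key_factor hm hind hid a i j hi1 hi2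
  set q : ENNReal := ∑ i ∈ Finset.Icc 1 n, P {ω | hitTimeAfter X a ω = i} with hq
  -- upper bound
  have hup : ∑ j ∈ Finset.Icc 1 n, μ (a + j) ≤ q * G n := by
    have h1 : ∑ j ∈ Finset.Icc 1 n, μ (a + j)
        = ∑ j ∈ Finset.Icc 1 n, ∑ i ∈ Finset.Icc 1 j,
            P {ω | hitTimeAfter X a ω = i} * μ (j - i) := by
      refine Finset.sum_congr rfl (fun j hj => ?_)
      exact hdecomp j (Finset.mem_Icc.mp hj).1
    have h2 : ∑ j ∈ Finset.Icc 1 n, ∑ i ∈ Finset.Icc 1 j,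
            P {ω | hitTimeAfter X a ω = i} * μ (j - i)
        = ∑ i ∈ Finset.Icc 1 n, ∑ j ∈ Finset.Icc i n,
            P {ω | hitTimeAfter X a ω = i} * μ (j - i) := by
      refine Finset.sum_comm' (fun j i => ?_)
      simp only [Finset.mem_Icc]
      omega
    rw [h1, h2, hq, Finset.sum_mul]
    refine Finset.sum_le_sum (fun i hi => ?_)
    rw [← Finset.mul_sum]
    refine mul_le_mul_right ?_ _
    have himg : ∑ j ∈ Finset.Icc i n, μ (j - i)
        = ∑ d ∈ (Finset.Icc i n).image (fun j => j - i), μ d := by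
      rw [Finset.sum_image]
      intro x hx y hy hxy
      obtain ⟨hx1, -⟩ := Finset.mem_Icc.mp hx
      obtain ⟨hy1, -⟩ := Finset.mem_Icc.mp hy
      simp only at hxy
      omega
    rw [himg]
    refine Finset.sum_le_sum_of_subset ?_
    intro d hd
    simp only [Finset.mem_image, Finset.mem_Icc] at hd
    obtain ⟨j, ⟨hj1, hj2⟩, hj3⟩ := hd
    simp only [Finset.mem_range]
    omega
  -- lower bound
  have hlow : G n ≤ G a + ∑ j ∈ Finset.Icc 1 n, μ (a + j) := by
    have hsub : Finset.range (n + 1) ⊆ Finset.range (a + 1) ∪ Finset.Icc (a + 1) n := by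
      intro r hr
      simp only [Finset.mem_range, Finset.mem_union, Finset.mem_Icc] at *
      omega
    have hdisj : Disjoint (Finset.range (a + 1)) (Finset.Icc (a + 1) n) := by
      simp only [Finset.disjoint_left, Finset.mem_range, Finset.mem_Icc]
      omega
    have himg : (Finset.Icc 1 (n - a)).image (fun j => a + j) = Finset.Icc (a + 1) n := by
      ext m
      simp only [Finset.mem_image, Finset.mem_Icc]
      constructor
      · rintro ⟨j, ⟨hj1, hj2⟩, rfl⟩; omega
      · rintro ⟨h1, h2⟩; exact ⟨m - a, by omega, by omega⟩
    calc G n ≤ ∑ r ∈ Finset.range (a + 1) ∪ Finset.Icc (a + 1) n, μ r :=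
      Finset.sum_le_sum_of_subset hsub
    _ = G a + ∑ m ∈ Finset.Icc (a + 1) n, μ m := by rw [Finset.sum_union hdisj]
    _ = G a + ∑ j ∈ Finset.Icc 1 (n - a), μ (a + j) := by
      rw [← himg, Finset.sum_image (fun x _ y _ h => by omega)]
    _ ≤ G a + ∑ j ∈ Finset.Icc 1 n, μ (a + j) := by
      refine add_le_add_right (Finset.sum_le_sum_of_subset ?_) _
      intro j hj
      simp only [Finset.mem_Icc] at *
      omega
  have hmain : G n ≤ G a + q * G n := hlow.trans (add_le_add_right hup _)
  -- the tail event is disjoint from {T = i}, i ≤ n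
  set E : Set Ω := {ω | k ≤ hitTimeAfter X a ω} with hE
  set D : Set Ω := ⋃ i ∈ Finset.Icc 1 n, {ω | hitTimeAfter X a ω = i} with hD
  have hDmeas : MeasurableSet D := by
    refine Finset.measurableSet_biUnion _ (fun i hi => ?_)
    have hi1 : 0 < i := by have := (Finset.mem_Icc.mp hi).1; omega
    exact meas_hit_eq hm a i hi1
  have hED : Disjoint E D := by
    simp only [Set.disjoint_left, hE, hD, Set.mem_setOf_eq, Set.mem_iUnion, Finset.mem_Icc,
      exists_prop]
    rintro ω hω ⟨i, ⟨hi1, hi2⟩, hTi⟩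
    omega
  have hqD : P D = q := by
    rw [hD, measure_biUnion_finset]
    · intro i hi i' hi' hii'
      simp only [Function.onFun, Set.disjoint_left, Set.mem_setOf_eq]
      intro ω h1 h2
      exact hii' (h1 ▸ h2 ▸ rfl)
    · intro i hi
      have hi1 : 0 < i := by have := (Finset.mem_Icc.mp hi).1; omega
      exact meas_hit_eq hm a i hi1
  have hEq : P E + q ≤ 1 := by
    rw [← hqD, ← measure_union hED hDmeas]
    exact prob_le_one
  -- pass to the reals
  have hq1 : q ≤ 1 := by
    rw [← hqD]; exact prob_le_one
  have hqfin : q ≠ ⊤ := (hq1.trans_lt ENNReal.one_lt_top).ne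
  set er := (P E).toReal with her
  set qr := q.toReal with hqr
  set gA := (G a).toReal with hgA
  set gN := (G n).toReal with hgN
  have her1 : er + qr ≤ 1 := by
    rw [her, hqr, ← ENNReal.toReal_add (measure_ne_top P E) hqfin]
    calc (P E + q).toReal ≤ (1 : ENNReal).toReal :=
      ENNReal.toReal_mono ENNReal.one_ne_top hEq
    _ = 1 := by simp
  have hmainr : gN ≤ gA + qr * gN := by
    have hfin : G a + q * G n ≠ ⊤ := by
      refine ENNReal.add_ne_top.mpr ⟨hGfin a, ?_⟩
      exact ENNReal.mul_ne_top hqfin (hGfin n)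
    have := ENNReal.toReal_mono hfin hmain
    rwa [ENNReal.toReal_add (hGfin a) (ENNReal.mul_ne_top hqfin (hGfin n)),
      ENNReal.toReal_mul] at this
  have hgN1 : (1 : ℝ) ≤ gN := by
    have := ENNReal.toReal_mono (hGfin n) (hG1 n)
    simpa using this
  have hgA0 : 0 ≤ gA := ENNReal.toReal_nonneg
  have hqr0 : 0 ≤ qr := ENNReal.toReal_nonneg
  have hgNpos : (0 : ℝ) < gN := by linarith
  have hstep1 : er ≤ 1 - qr := by linarith
  have hstep2 : (1 : ℝ) - qr ≤ gA / gN := by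
    rw [le_div_iff₀ hgNpos]
    nlinarith
  have hstep3 : gA / gN ≤ 2 * gA / gN := by
    gcongr
    linarith
  have : er ≤ 2 * gA / gN := le_trans hstep1 (le_trans hstep2 hstep3)
  rw [hgreen a, hgreen n]
  exact this
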